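/- (Gauss) For every real x with |x| < 1, K(x) = (π/2) · 1/M(1+x, 1−x), where K is the complete elliptic integral of the first kind and M is the arithmetic–geometric mean. -/

import Mathlib

set_option maxHeartbeats 1000000

open Real Filter Topology MeasureTheory

/-- The pair of sequences defined by iterating the arithmetic mean and the geometric mean. -/
noncomputable def agmSeq (a b : ℝ) : ℕ → ℝ × ℝ
  | 0 => (a, b)
  | n + 1 => (((agmSeq a b n).1 + (agmSeq a b n).2) / 2,
      Real.sqrt ((agmSeq a b n).1 * (agmSeq a b n).2))

/-- The arithmetic–geometric mean of `a` and `b`: the common limit of the two sequences. -/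
noncomputable def agm (a b : ℝ) : ℝ :=
  limUnder atTop (fun n => (agmSeq a b n).1)

/-- The complete elliptic integral of the first kind. -/
noncomputable def ellipticK (x : ℝ) : ℝ :=
  ∫ φ in (0 : ℝ)..(π / 2), 1 / Real.sqrt (1 - x ^ 2 * Real.sin φ ^ 2)

noncomputable def glandI (a b : ℝ) : ℝ :=
  ∫ θ in (0:ℝ)..(π/2), 1 / Real.sqrt (a^2 * Real.cos θ^2 + b^2 * Real.sin θ^2)

noncomputable def glandJ (a b : ℝ) : ℝ :=
  ∫ t in Set.Ioi (0:ℝ), 1 / Real.sqrt ((a^2 + t^2) * (b^2 + t^2))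

section AGM
variable {a b : ℝ} (hb : 0 < b) (hba : b ≤ a)

include hb hba in
lemma agm_aux (n : ℕ) : 0 < (agmSeq a b n).2 ∧ (agmSeq a b n).2 ≤ (agmSeq a b n).1 ∧
    b ≤ (agmSeq a b n).2 ∧ (agmSeq a b (n+1)).1 ≤ (agmSeq a b n).1 := by
  induction n with
  | zero =>
    refine ⟨hb, hba, le_refl _, ?_⟩
    show (a + b)/2 ≤ a
    linarith
  | succ n ih =>
    obtain ⟨h1, h2, h3, h4⟩ := ih
    have hA : 0 < (agmSeq a b n).1 := lt_of_lt_of_le h1 h2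
    have hg : 0 < Real.sqrt ((agmSeq a b n).1 * (agmSeq a b n).2) :=
      Real.sqrt_pos.mpr (mul_pos hA h1)
    have hgm : Real.sqrt ((agmSeq a b n).1 * (agmSeq a b n).2)
        ≤ ((agmSeq a b n).1 + (agmSeq a b n).2) / 2 := by
      rw [show (agmSeq a b n).1 * (agmSeq a b n).2 =
        (Real.sqrt (agmSeq a b n).1 * Real.sqrt (agmSeq a b n).2)^2 by
          rw [mul_pow, Real.sq_sqrt hA.le, Real.sq_sqrt h1.le]]
      rw [Real.sqrt_sq (by positivity)]
      nlinarith [sq_nonneg (Real.sqrt (agmSeq a b n).1 - Real.sqrt (agmSeq a b n).2),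
        Real.sq_sqrt hA.le, Real.sq_sqrt h1.le]
    have hb2 : b ≤ Real.sqrt ((agmSeq a b n).1 * (agmSeq a b n).2) := by
      have : b ≤ (agmSeq a b n).2 := h3
      calc b = Real.sqrt (b * b) := by rw [Real.sqrt_mul_self hb.le]
        _ ≤ _ := Real.sqrt_le_sqrt (by nlinarith [h3, h2, hb])
    refine ⟨by simpa [agmSeq] using hg, by simpa [agmSeq] using hgm,
      by simpa [agmSeq] using hb2, ?_⟩
    show ((agmSeq a b (n+1)).1 + (agmSeq a b (n+1)).2) / 2 ≤ (agmSeq a b (n+1)).1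
    have : (agmSeq a b (n+1)).2 ≤ (agmSeq a b (n+1)).1 := by simpa [agmSeq] using hgm
    linarith

include hb hba in
lemma agm_tendsto : ∃ M : ℝ, b ≤ M ∧ M ≤ a ∧
    Tendsto (fun n => (agmSeq a b n).1) atTop (𝓝 M) ∧
    Tendsto (fun n => (agmSeq a b n).2) atTop (𝓝 M) := by
  have aux := fun n => agm_aux hb hba n
  have hanti : Antitone (fun n => (agmSeq a b n).1) :=
    antitone_nat_of_succ_le (fun n => (aux n).2.2.2)
  have hbdd : BddBelow (Set.range (fun n => (agmSeq a b n).1)) := by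
    refine ⟨b, ?_⟩
    rintro y ⟨n, rfl⟩
    exact le_trans (aux n).2.2.1 (aux n).2.1
  set M := ⨅ n, (agmSeq a b n).1 with hM
  have hta : Tendsto (fun n => (agmSeq a b n).1) atTop (𝓝 M) :=
    tendsto_atTop_ciInf hanti hbdd
  have hMb : b ≤ M := le_ciInf (fun n => le_trans (aux n).2.2.1 (aux n).2.1)
  have hMa : M ≤ a := ciInf_le hbdd 0
  have hshift : Tendsto (fun n => (agmSeq a b (n+1)).1) atTop (𝓝 M) :=
    hta.comp (tendsto_add_atTop_nat 1)
  have htb : Tendsto (fun n => (agmSeq a b n).2) atTop (𝓝 M) := by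
    have heq : ∀ n, (agmSeq a b n).2 = 2 * (agmSeq a b (n+1)).1 - (agmSeq a b n).1 := by
      intro n; show _ = 2 * (((agmSeq a b n).1 + (agmSeq a b n).2)/2) - _; ring
    simp_rw [heq]
    have h2M : (2:ℝ) * M - M = M := by ring
    have := (hshift.const_mul 2).sub hta
    rw [h2M] at this
    exact this
  exact ⟨M, hMb, hMa, hta, htb⟩

end AGM


section Bounds
variable {a b : ℝ} (hb : 0 < b) (hba : b ≤ a)

include hb hba in
lemma glandI_E_bounds (θ : ℝ) : b^2 ≤ a^2 * Real.cos θ^2 + b^2 * Real.sin θ^2 ∧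
    a^2 * Real.cos θ^2 + b^2 * Real.sin θ^2 ≤ a^2 := by
  have h := Real.sin_sq_add_cos_sq θ
  have e1 : a^2 * Real.cos θ^2 + b^2 * Real.sin θ^2 - b^2 = (a^2 - b^2) * Real.cos θ^2 := by
    linear_combination (b^2) * h
  have e2 : a^2 - (a^2 * Real.cos θ^2 + b^2 * Real.sin θ^2) = (a^2 - b^2) * Real.sin θ^2 := by
    linear_combination (-(a^2)) * h
  have hab2 : 0 ≤ a^2 - b^2 := by nlinarith
  constructor
  · nlinarith [mul_nonneg hab2 (sq_nonneg (Real.cos θ))]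
  · nlinarith [mul_nonneg hab2 (sq_nonneg (Real.sin θ))]

include hb hba in
lemma glandI_integrand_bounds (θ : ℝ) :
    1/a ≤ 1 / Real.sqrt (a^2 * Real.cos θ^2 + b^2 * Real.sin θ^2) ∧
    1 / Real.sqrt (a^2 * Real.cos θ^2 + b^2 * Real.sin θ^2) ≤ 1/b := by
  obtain ⟨h1, h2⟩ := glandI_E_bounds hb hba θ
  have ha : 0 < a := lt_of_lt_of_le hb hba
  have hs1 : b ≤ Real.sqrt (a^2 * Real.cos θ^2 + b^2 * Real.sin θ^2) := by
    calc b = Real.sqrt (b^2) := by rw [Real.sqrt_sq hb.le]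
    _ ≤ _ := Real.sqrt_le_sqrt h1
  have hs2 : Real.sqrt (a^2 * Real.cos θ^2 + b^2 * Real.sin θ^2) ≤ a := by
    calc _ ≤ Real.sqrt (a^2) := Real.sqrt_le_sqrt h2
    _ = a := Real.sqrt_sq ha.le
  constructor
  · exact one_div_le_one_div_of_le (lt_of_lt_of_le hb hs1) hs2
  · exact one_div_le_one_div_of_le hb hs1

include hb hba in
lemma glandI_continuous : Continuous
    (fun θ => 1 / Real.sqrt (a^2 * Real.cos θ^2 + b^2 * Real.sin θ^2)) := by
  apply Continuous.div continuous_const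
  · exact (Real.continuous_sqrt.comp (by continuity))
  · intro θ
    have h := (glandI_E_bounds hb hba θ).1
    exact ne_of_gt (Real.sqrt_pos.mpr (lt_of_lt_of_le (by positivity) h))

include hb hba in
lemma glandI_intervalIntegrable : IntervalIntegrable
    (fun θ => 1 / Real.sqrt (a^2 * Real.cos θ^2 + b^2 * Real.sin θ^2)) volume 0 (π/2) :=
  (glandI_continuous hb hba).intervalIntegrable 0 (π/2)

include hb hba in
lemma glandI_bounds : π/2 * (1/a) ≤ glandI a b ∧ glandI a b ≤ π/2 * (1/b) := by
  have hpi : (0:ℝ) ≤ π/2 := by positivity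
  constructor
  · have := intervalIntegral.integral_mono_on hpi
      (intervalIntegrable_const (c := 1/a)) (glandI_intervalIntegrable hb hba)
      (fun θ _ => (glandI_integrand_bounds hb hba θ).1)
    simpa [glandI, mul_comm] using this
  · have := intervalIntegral.integral_mono_on hpi
      (glandI_intervalIntegrable hb hba) (intervalIntegrable_const (c := 1/b))
      (fun θ _ => (glandI_integrand_bounds hb hba θ).2)
    simpa [glandI, mul_comm] using this

end Bounds

lemma glandJ_eq_glandI {a b : ℝ} (ha : 0 < a) (hb : 0 < b) : glandJ a b = glandI a b := by
  set f : ℝ → ℝ := fun θ => b * Real.tan θ with hf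
  have himg : f '' Set.Ioo 0 (π/2) = Set.Ioi 0 := by
    apply Set.eq_of_subset_of_subset
    · rintro y ⟨θ, hθ, rfl⟩
      exact mul_pos hb (Real.tan_pos_of_pos_of_lt_pi_div_two hθ.1 hθ.2)
    · rintro y hy
      have hyb : (0:ℝ) < y / b := div_pos hy hb
      refine ⟨Real.arctan (y / b), ⟨by
        simpa [Real.arctan_zero] using Real.arctan_strictMono hyb,
        Real.arctan_lt_pi_div_two _⟩, ?_⟩
      simp [hf, Real.tan_arctan]
      field_simp
  have hderiv : ∀ θ ∈ Set.Ioo 0 (π/2),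
      HasDerivWithinAt f (b * (1 / Real.cos θ^2)) (Set.Ioo 0 (π/2)) θ := by
    intro θ hθ
    have hc : 0 < Real.cos θ := Real.cos_pos_of_mem_Ioo
      ⟨by linarith [hθ.1, pi_div_two_pos], hθ.2⟩
    exact ((Real.hasDerivAt_tan hc.ne').const_mul b).hasDerivWithinAt
  have hinj : Set.InjOn f (Set.Ioo 0 (π/2)) := by
    intro x hx y hy hxy
    have hsub : Set.Ioo (0:ℝ) (π/2) ⊆ Set.Ioo (-(π/2)) (π/2) := fun z hz =>
      ⟨by linarith [hz.1, pi_div_two_pos], hz.2⟩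
    exact Real.injOn_tan (hsub hx) (hsub hy) (mul_left_cancel₀ hb.ne' hxy)
  have key := integral_image_eq_integral_abs_deriv_smul measurableSet_Ioo hderiv hinj
    (fun t => 1 / Real.sqrt ((a^2 + t^2) * (b^2 + t^2)))
  rw [himg] at key
  rw [glandJ, key, glandI]
  rw [intervalIntegral.integral_of_le (le_of_lt pi_div_two_pos)]
  rw [MeasureTheory.integral_Ioc_eq_integral_Ioo]
  apply setIntegral_congr_fun measurableSet_Ioo
  intro θ hθ
  have hc : 0 < Real.cos θ := Real.cos_pos_of_mem_Ioo
    ⟨by linarith [hθ.1, pi_div_two_pos], hθ.2⟩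
  have hE : 0 < a^2 * Real.cos θ^2 + b^2 * Real.sin θ^2 := by positivity
  have htan : Real.tan θ = Real.sin θ / Real.cos θ := Real.tan_eq_sin_div_cos θ
  have hs := Real.sin_sq_add_cos_sq θ
  have h1 : a^2 + (b * Real.tan θ)^2
      = (a^2 * Real.cos θ^2 + b^2 * Real.sin θ^2) / Real.cos θ^2 := by
    rw [htan]; field_simp
  have h2 : b^2 + (b * Real.tan θ)^2 = b^2 / Real.cos θ^2 := by
    rw [htan]; field_simp; linear_combination hs
  have hprod : (a^2 + (b * Real.tan θ)^2) * (b^2 + (b * Real.tan θ)^2)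
      = (a^2 * Real.cos θ^2 + b^2 * Real.sin θ^2) * (b / Real.cos θ^2)^2 := by
    rw [h1, h2]; field_simp
  have hsqrt : Real.sqrt ((a^2 + (b * Real.tan θ)^2) * (b^2 + (b * Real.tan θ)^2))
      = Real.sqrt (a^2 * Real.cos θ^2 + b^2 * Real.sin θ^2) * (b / Real.cos θ^2) := by
    rw [hprod, Real.sqrt_mul hE.le, Real.sqrt_sq (by positivity)]
  show |b * (1 / Real.cos θ^2)| • (1 / Real.sqrt ((a^2 + (b * Real.tan θ)^2) * (b^2 + (b * Real.tan θ)^2))) = _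
  rw [hsqrt, abs_of_pos (by positivity), smul_eq_mul]
  have hsE : 0 < Real.sqrt (a^2 * Real.cos θ^2 + b^2 * Real.sin θ^2) := Real.sqrt_pos.mpr hE
  field_simp


lemma glandJ_step {a b : ℝ} (ha : 0 < a) (hb : 0 < b) :
    glandJ a b = glandJ ((a+b)/2) (Real.sqrt (a*b)) := by
  set a1 : ℝ := (a+b)/2 with ha1
  set b1 : ℝ := Real.sqrt (a*b) with hb1def
  have hab : 0 < a*b := mul_pos ha hb
  have hb1 : 0 < b1 := Real.sqrt_pos.mpr hab
  have hb1sq : b1^2 = a*b := Real.sq_sqrt hab.le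
  set f : ℝ → ℝ := fun t => (t - a*b*t⁻¹)/2 with hf
  set g : ℝ → ℝ := fun u => 1 / Real.sqrt ((a1^2+u^2)*(b1^2+u^2)) with hg
  have himg : f '' Set.Ioi 0 = Set.univ := by
    apply Set.eq_univ_of_forall
    intro u
    have hD : (0:ℝ) < u^2 + a*b := by positivity
    have hsD : |u| < Real.sqrt (u^2 + a*b) := by
      rw [← Real.sqrt_sq_eq_abs]
      exact Real.sqrt_lt_sqrt (sq_nonneg u) (by linarith)
    have ht : 0 < u + Real.sqrt (u^2 + a*b) := by
      have := neg_abs_le u; linarith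
    refine ⟨u + Real.sqrt (u^2 + a*b), ht, ?_⟩
    have htsq : Real.sqrt (u^2+a*b)^2 = u^2+a*b := Real.sq_sqrt hD.le
    show ((u + Real.sqrt (u^2+a*b)) - a*b*(u + Real.sqrt (u^2 + a*b))⁻¹)/2 = u
    field_simp
    linear_combination htsq
  have hderiv : ∀ t ∈ Set.Ioi (0:ℝ),
      HasDerivWithinAt f ((1 + a*b*(t^2)⁻¹)/2) (Set.Ioi 0) t := by
    intro t ht
    have ht0 : t ≠ 0 := (ne_of_gt ht)
    have h1 : HasDerivAt (fun t : ℝ => (t - a*b*t⁻¹)/2)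
        ((1 - a*b*(-(t^2)⁻¹))/2) t :=
      ((hasDerivAt_id t).sub ((hasDerivAt_inv ht0).const_mul (a*b))).div_const 2
    have : (1 - a*b*(-(t^2)⁻¹))/2 = (1 + a*b*(t^2)⁻¹)/2 := by ring
    rw [this] at h1
    exact h1.hasDerivWithinAt
  have hinj : Set.InjOn f (Set.Ioi 0) := by
    intro x hx y hy hxy
    have hx0 : (0:ℝ) < x := hx
    have hy0 : (0:ℝ) < y := hy
    have h : (x - y) * (x*y + a*b) = 0 := by
      have h2 : (x - a*b*x⁻¹)/2 = (y - a*b*y⁻¹)/2 := hxy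
      field_simp at h2
      linear_combination h2
    rcases mul_eq_zero.mp h with h' | h'
    · linarith
    · nlinarith
  have key := integral_image_eq_integral_abs_deriv_smul measurableSet_Ioi hderiv hinj g
  rw [himg] at key
  have heven : ∫ u in Set.univ, g u = 2 * glandJ a1 b1 := by
    rw [MeasureTheory.setIntegral_univ]
    have : ∀ u : ℝ, g u = g |u| := by
      intro u; simp only [hg, sq_abs]
    rw [show (fun u => g u) = (fun u => g |u|) from funext this]
    rw [integral_comp_abs (f := g)]
    rfl
  have hRHS : (∫ t in Set.Ioi (0:ℝ), |(1 + a*b*(t^2)⁻¹)/2| • g (f t))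
      = 2 * glandJ a b := by
    rw [glandJ, ← MeasureTheory.integral_const_mul]
    apply setIntegral_congr_fun measurableSet_Ioi
    intro t ht
    have ht0 : (0:ℝ) < t := ht
    have hP : (0:ℝ) < (a^2 + t^2) * (b^2 + t^2) := by positivity
    have hsP : 0 < Real.sqrt ((a^2 + t^2) * (b^2 + t^2)) := Real.sqrt_pos.mpr hP
    have cY : b1^2 + (f t)^2 = ((t^2+a*b)/(2*t))^2 := by
      rw [hb1sq]; show a*b + ((t - a*b*t⁻¹)/2)^2 = _
      field_simp; ring
    have cX : a1^2 + (f t)^2 = ((a^2 + t^2) * (b^2 + t^2))/(2*t)^2 := by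
      rw [ha1]; show ((a+b)/2)^2 + ((t - a*b*t⁻¹)/2)^2 = _
      field_simp; ring
    have hsqrt : Real.sqrt ((a1^2 + (f t)^2) * (b1^2 + (f t)^2))
        = (Real.sqrt ((a^2 + t^2) * (b^2 + t^2))/(2*t)) * ((t^2+a*b)/(2*t)) := by
      rw [cX, cY, Real.sqrt_mul (by positivity), Real.sqrt_sq (by positivity),
        Real.sqrt_div hP.le, Real.sqrt_sq (by positivity)]
    show |(1 + a*b*(t^2)⁻¹)/2| • (1 / Real.sqrt ((a1^2 + (f t)^2) * (b1^2 + (f t)^2))) = _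
    rw [hsqrt, abs_of_pos (by positivity), smul_eq_mul]
    field_simp
  rw [key, hRHS] at heven
  have := heven.symm
  rw [ha1, hb1def] at this ⊢
  linarith

lemma agmSeq_succ_eq (a b : ℝ) (n : ℕ) :
    agmSeq a b (n+1) = agmSeq ((a+b)/2) (Real.sqrt (a*b)) n := by
  induction n with
  | zero => rfl
  | succ n ih =>
    show (((agmSeq a b (n+1)).1 + (agmSeq a b (n+1)).2) / 2,
      Real.sqrt ((agmSeq a b (n+1)).1 * (agmSeq a b (n+1)).2)) = _
    rw [ih]
    rfl

lemma glandI_eq_agmLimit {a b : ℝ} (hb : 0 < b) (hba : b ≤ a) :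
    ∃ M : ℝ, 0 < M ∧ Tendsto (fun n => (agmSeq a b n).1) atTop (𝓝 M) ∧
      glandI a b = π/2 * (1/M) := by
  obtain ⟨M, hMb, hMa, hta, htb⟩ := agm_tendsto hb hba
  have hM : 0 < M := lt_of_lt_of_le hb hMb
  refine ⟨M, hM, hta, ?_⟩
  have hinv : ∀ n, glandI (agmSeq a b n).1 (agmSeq a b n).2 = glandI a b := by
    intro n
    induction n with
    | zero => rfl
    | succ n ih =>
      rw [← ih]
      obtain ⟨h1, h2, h3, h4⟩ := agm_aux hb hba n
      have hA : 0 < (agmSeq a b n).1 := lt_of_lt_of_le h1 h2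
      have step : glandI (agmSeq a b n).1 (agmSeq a b n).2
          = glandI (((agmSeq a b n).1 + (agmSeq a b n).2)/2)
            (Real.sqrt ((agmSeq a b n).1 * (agmSeq a b n).2)) := by
        rw [← glandJ_eq_glandI hA h1, glandJ_step hA h1,
          glandJ_eq_glandI (by positivity) (Real.sqrt_pos.mpr (mul_pos hA h1))]
      rw [step]
      rfl
  have hlow : ∀ n, π/2 * (1/(agmSeq a b n).1) ≤ glandI a b := by
    intro n
    obtain ⟨h1, h2, _, _⟩ := agm_aux hb hba n
    rw [← hinv n]
    exact (glandI_bounds h1 h2).1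
  have hup : ∀ n, glandI a b ≤ π/2 * (1/(agmSeq a b n).2) := by
    intro n
    obtain ⟨h1, h2, _, _⟩ := agm_aux hb hba n
    rw [← hinv n]
    exact (glandI_bounds h1 h2).2
  have hl : Tendsto (fun n => π/2 * (1/(agmSeq a b n).1)) atTop (𝓝 (π/2 * (1/M))) :=
    ((tendsto_const_nhds (x := (1:ℝ))).div hta hM.ne').const_mul _
  have hu : Tendsto (fun n => π/2 * (1/(agmSeq a b n).2)) atTop (𝓝 (π/2 * (1/M))) :=
    ((tendsto_const_nhds (x := (1:ℝ))).div htb hM.ne').const_mul _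
  exact le_antisymm (ge_of_tendsto' hu hup) (le_of_tendsto' hl hlow)

/-- Gauss' theorem relating the complete elliptic integral of the first kind
to the arithmetic–geometric mean. -/
theorem gauss_ellipticK_agm (x : ℝ) (hx : |x| < 1) :
    ellipticK x = (π / 2) * (1 / agm (1 + x) (1 - x)) := by
  obtain ⟨hx1, hx2⟩ := abs_lt.mp hx
  have hx2' : 0 < 1 - x^2 := by nlinarith
  set b' : ℝ := Real.sqrt (1 - x^2) with hb'def
  have hb' : 0 < b' := Real.sqrt_pos.mpr hx2'
  have hb'sq : b'^2 = 1 - x^2 := Real.sq_sqrt hx2'.le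
  have hb'le : b' ≤ 1 := by
    rw [show (1:ℝ) = Real.sqrt 1 from (Real.sqrt_one).symm]
    exact Real.sqrt_le_sqrt (by nlinarith)
  have hK : ellipticK x = glandI 1 b' := by
    rw [ellipticK, glandI]
    apply intervalIntegral.integral_congr
    intro θ _
    have hs := Real.sin_sq_add_cos_sq θ
    have : 1 - x^2 * Real.sin θ^2 = 1^2 * Real.cos θ^2 + b'^2 * Real.sin θ^2 := by
      rw [hb'sq]; linear_combination -hs
    dsimp only
    rw [this]
  obtain ⟨M, hM, hta, hIeq⟩ := glandI_eq_agmLimit hb' hb'le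
  have hshift : ∀ n, agmSeq (1+x) (1-x) (n+1) = agmSeq 1 b' n := by
    intro n
    rw [agmSeq_succ_eq]
    congr 1
    · ring
    · rw [hb'def]; congr 1; ring
  have hta' : Tendsto (fun n => (agmSeq (1+x) (1-x) n).1) atTop (𝓝 M) := by
    have : Tendsto (fun n => (agmSeq (1+x) (1-x) (n+1)).1) atTop (𝓝 M) := by
      simp only [hshift]; exact hta
    exact (tendsto_add_atTop_iff_nat 1).mp this
  have hagm : agm (1+x) (1-x) = M := hta'.limUnder_eq
  rw [hK, hIeq, hagm]
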